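/- For any 2m×2m skew-symmetric matrix B over a commutative ring containing 1/2, pf^(α)(B) = 2^{-m} ∑_{i_1,...,i_m ∈ {0,1}} (-1)^{i_1+...+i_m} det^(2α)( (B_{i_r, i_s+1}(r,s))_{1≤r,s≤m} ), where the second index is taken modulo 2. -/

import Mathlib

open Matrix
open scoped Classical

variable {R : Type*} [CommRing R] [Invertible (2 : R)]

/-- The `(i,j)` entry (indices in `ZMod 2`) of the `2 × 2` block `B(r,s)` of `B`. -/
def Bblk {m : ℕ} (B : Matrix (Fin (2 * m)) (Fin (2 * m)) R) (r s : Fin m)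
    (i j : ZMod 2) : R :=
  B ⟨2 * r.val + i.val, by have := r.isLt; have := ZMod.val_lt i; omega⟩
    ⟨2 * s.val + j.val, by have := s.isLt; have := ZMod.val_lt j; omega⟩

/-- `P(B)(τ)` for the cycle `τ = (k 0, …, k (r-1))`. -/
noncomputable def Pcyc {m r : ℕ} [NeZero r] (B : Matrix (Fin (2 * m)) (Fin (2 * m)) R)
    (k : Fin r → Fin m) : R :=
  ⅟(2 : R) * ∑ i : Fin r → ZMod 2,
    (∏ j, (-1 : R) ^ (i j).val) * ∏ j, Bblk B (k j) (k (j + 1)) (i j) (i (j + 1) + 1)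

/-- The set of minimal representatives of the cycles (orbits) of `σ`. -/
noncomputable def reps {m : ℕ} (σ : Equiv.Perm (Fin m)) : Finset (Fin m) :=
  Finset.univ.filter fun x => ∀ n : ℕ, x ≤ (σ ^ n) x

/-- The number of cycles (orbits, including fixed points) of `σ`. -/
noncomputable def nu {m : ℕ} (σ : Equiv.Perm (Fin m)) : ℕ := (reps σ).card

/-- The length of the cycle of `σ` through `x`. -/
noncomputable def cycLen {m : ℕ} (σ : Equiv.Perm (Fin m)) (x : Fin m) : ℕ :=
  orderOf (σ.cycleOf x)

/-- The α-pfaffian `pf^(α)(B) = ∑_σ α^{m-ν(σ)} ∏ⱼ P(B)(σ⁽ʲ⁾)`. -/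
noncomputable def apf {m : ℕ} (α : R) (B : Matrix (Fin (2 * m)) (Fin (2 * m)) R) : R :=
  ∑ σ : Equiv.Perm (Fin m), α ^ (m - nu σ) *
    ∏ x ∈ reps σ,
      haveI : NeZero (cycLen σ x) := ⟨(orderOf_pos _).ne'⟩
      Pcyc B (fun j : Fin (cycLen σ x) => (σ ^ (j : ℕ)) x)

/-- The α-determinant `det^(α)(A) = ∑_σ α^{m-ν(σ)} ∏ᵢ a_{i σ(i)}`. -/
noncomputable def adet {m : ℕ} (α : R) (A : Matrix (Fin m) (Fin m) R) : R :=
  ∑ σ : Equiv.Perm (Fin m), α ^ (m - nu σ) * ∏ i, A i (σ i)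

section Aux

variable {m : ℕ} (σ : Equiv.Perm (Fin m))

lemma cycLen_pos (x : Fin m) : 0 < cycLen σ x := orderOf_pos _

instance cycLen_neZero (x : Fin m) : NeZero (cycLen σ x) := ⟨(orderOf_pos _).ne'⟩

/-- The orbit of `x` under `σ`, as a `Finset`. -/
noncomputable def orb (x : Fin m) : Finset (Fin m) :=
  Finset.univ.filter (σ.SameCycle x ·)

lemma mem_orb {x y : Fin m} : y ∈ orb σ x ↔ σ.SameCycle x y := by
  simp [orb]

lemma orb_nonempty (x : Fin m) : (orb σ x).Nonempty :=
  ⟨x, (mem_orb σ).2 (Equiv.Perm.SameCycle.refl σ x)⟩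

lemma orb_eq {x y : Fin m} (h : σ.SameCycle x y) : orb σ x = orb σ y := by
  ext z
  simp only [mem_orb]
  exact ⟨fun hz => h.symm.trans hz, fun hz => h.trans hz⟩

/-- The minimal representative of the orbit of `y`. -/
noncomputable def rp (y : Fin m) : Fin m := (orb σ y).min' (orb_nonempty σ y)

lemma rp_sameCycle (y : Fin m) : σ.SameCycle y (rp σ y) :=
  (mem_orb σ).1 ((orb σ y).min'_mem (orb_nonempty σ y))

lemma rp_eq_of_sameCycle {y z : Fin m} (h : σ.SameCycle y z) : rp σ y = rp σ z := by
  unfold rp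
  congr 1
  exact orb_eq σ h

lemma sameCycle_pow (x : Fin m) (n : ℕ) : σ.SameCycle x ((σ ^ n) x) :=
  ⟨(n : ℤ), by rw [zpow_natCast]⟩

lemma rp_mem_reps (y : Fin m) : rp σ y ∈ reps σ := by
  simp only [reps, Finset.mem_filter, Finset.mem_univ, true_and]
  intro n
  apply Finset.min'_le
  rw [mem_orb]
  exact (rp_sameCycle σ y).trans (sameCycle_pow σ _ n)

lemma rp_eq_self_of_mem {x : Fin m} (hx : x ∈ reps σ) : rp σ x = x := by
  apply le_antisymm
  · exact Finset.min'_le _ _ ((mem_orb σ).2 (Equiv.Perm.SameCycle.refl σ x))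
  · obtain ⟨i, _, hi⟩ := (rp_sameCycle σ x).exists_pow_eq'
    simp only [reps, Finset.mem_filter, Finset.mem_univ, true_and] at hx
    rw [← hi]
    exact hx i

lemma pow_mod_cycLen (x : Fin m) (n : ℕ) :
    (σ ^ (n % cycLen σ x)) x = (σ ^ n) x := by
  have := Equiv.Perm.pow_mod_orderOf_cycleOf_apply σ n x
  simpa [cycLen] using this

lemma pow_apply_self_iff (x : Fin m) (n : ℕ) :
    (σ ^ n) x = x ↔ cycLen σ x ∣ n := by
  by_cases hx : σ x = x
  · have h1 : σ.cycleOf x = 1 := by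
      rw [Equiv.Perm.cycleOf_eq_one_iff]; exact hx
    have hL : cycLen σ x = 1 := by simp [cycLen, h1]
    simp [hL, Equiv.Perm.pow_apply_eq_self_of_apply_eq_self hx]
  · have hxs : x ∈ (σ.cycleOf x).support := by
      rw [Equiv.Perm.mem_support_cycleOf_iff]
      exact ⟨Equiv.Perm.SameCycle.refl σ x, by rwa [Equiv.Perm.mem_support]⟩
    have hcard : (σ.cycleOf x).support.card = cycLen σ x := by
      rw [cycLen, (Equiv.Perm.isCycle_cycleOf σ hx).orderOf]
    rw [← hcard]
    exact (σ.isCycleOn_support_cycleOf x).pow_apply_eq hxs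

private lemma pow_apply_inj_aux (x : Fin m) {j k : ℕ} (hk : k < cycLen σ x)
    (hle : j ≤ k) (h : (σ ^ j) x = (σ ^ k) x) : j = k := by
  have h3 : (σ ^ j) ((σ ^ (k - j)) x) = (σ ^ j) x := by
    rw [← Equiv.Perm.mul_apply, ← pow_add, Nat.add_sub_cancel' hle]
    exact h.symm
  have h4 : (σ ^ (k - j)) x = x := (σ ^ j).injective h3
  have hd := (pow_apply_self_iff σ x _).1 h4
  have : k - j = 0 := Nat.eq_zero_of_dvd_of_lt hd (by omega) |>.symm ▸ rfl
  omega

lemma pow_apply_inj (x : Fin m) {j k : ℕ} (hj : j < cycLen σ x) (hk : k < cycLen σ x)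
    (h : (σ ^ j) x = (σ ^ k) x) : j = k := by
  rcases le_total j k with hle | hle
  · exact pow_apply_inj_aux σ x hk hle h
  · exact (pow_apply_inj_aux σ x hj hle h.symm).symm


/-- The index of `y` in the cycle of `x` (meaningful when they lie on the same cycle). -/
noncomputable def idx (x y : Fin m) : Fin (cycLen σ x) :=
  if h : ∃ j : Fin (cycLen σ x), (σ ^ (j : ℕ)) x = y then h.choose
  else ⟨0, cycLen_pos σ x⟩

lemma exists_fin_pow {x y : Fin m} (h : σ.SameCycle x y) :
    ∃ j : Fin (cycLen σ x), (σ ^ (j : ℕ)) x = y := by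
  obtain ⟨i, _, hi⟩ := h.exists_pow_eq'
  exact ⟨⟨i % cycLen σ x, Nat.mod_lt _ (cycLen_pos σ x)⟩, by
    simpa [pow_mod_cycLen] using hi⟩

lemma idx_spec {x y : Fin m} (h : σ.SameCycle x y) : (σ ^ ((idx σ x y : ℕ))) x = y := by
  rw [idx, dif_pos (exists_fin_pow σ h)]
  exact (exists_fin_pow σ h).choose_spec

lemma idx_pow (x : Fin m) (j : Fin (cycLen σ x)) : idx σ x ((σ ^ (j : ℕ)) x) = j := by
  have h := idx_spec σ (sameCycle_pow σ x j)
  exact Fin.ext (pow_apply_inj σ x (idx σ x ((σ ^ (j : ℕ)) x)).isLt j.isLt h)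

lemma pow_succ_fin (x : Fin m) (j : Fin (cycLen σ x)) :
    (σ ^ (((j + 1 : Fin (cycLen σ x))) : ℕ)) x = σ ((σ ^ (j : ℕ)) x) := by
  have h1 : ((j + 1 : Fin (cycLen σ x)) : ℕ) = (j.val + 1) % cycLen σ x := by
    rw [Fin.add_def]
    simp only [Fin.val_one']
    conv_rhs => rw [Nat.add_mod, Nat.mod_eq_of_lt j.isLt]
  rw [h1, pow_mod_cycLen, pow_succ', Equiv.Perm.mul_apply]

lemma univ_eq_biUnion : (Finset.univ : Finset (Fin m)) = (reps σ).biUnion (orb σ) := by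
  ext y
  simp only [Finset.mem_univ, Finset.mem_biUnion, true_iff]
  exact ⟨rp σ y, rp_mem_reps σ y, (mem_orb σ).2 (rp_sameCycle σ y).symm⟩

lemma orb_disjoint : (↑(reps σ) : Set (Fin m)).PairwiseDisjoint (orb σ) := by
  intro x hx x' hx' hne
  simp only [Finset.mem_coe] at hx hx'
  simp only [Function.onFun]
  rw [Finset.disjoint_left]
  intro y hy hy'
  rw [mem_orb] at hy hy'
  apply hne
  have := rp_eq_of_sameCycle σ (hy.trans hy'.symm)
  rwa [rp_eq_self_of_mem σ hx, rp_eq_self_of_mem σ hx'] at this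

lemma prod_univ_eq {M : Type*} [CommMonoid M] (h : Fin m → M) :
    ∏ r, h r = ∏ x ∈ reps σ, ∏ j : Fin (cycLen σ x), h ((σ ^ (j : ℕ)) x) := by
  rw [univ_eq_biUnion σ, Finset.prod_biUnion (orb_disjoint σ)]
  refine Finset.prod_congr rfl fun x hx => ?_
  refine Finset.prod_nbij' (i := fun y => idx σ x y)
    (j := fun j : Fin (cycLen σ x) => (σ ^ (j : ℕ)) x)
    (g := fun j : Fin (cycLen σ x) => h ((σ ^ (j : ℕ)) x)) ?_ ?_ ?_ ?_ ?_
  · intro y _; exact Finset.mem_univ _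
  · intro j _; exact (mem_orb σ).2 (sameCycle_pow σ x j)
  · intro y hy; exact idx_spec σ ((mem_orb σ).1 hy)
  · intro j _; exact idx_pow σ x j
  · intro y hy
    rw [idx_spec σ ((mem_orb σ).1 hy)]


/-- Glue a family of functions on the cycles into a function on `Fin m`. -/
noncomputable def glue (p : ∀ a : Fin m, a ∈ reps σ → (Fin (cycLen σ a) → ZMod 2)) :
    Fin m → ZMod 2 :=
  fun y => p (rp σ y) (rp_mem_reps σ y) (idx σ (rp σ y) y)

/-- Split a function on `Fin m` into a family of functions on the cycles. -/
noncomputable def split (i : Fin m → ZMod 2) :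
    ∀ a : Fin m, a ∈ reps σ → (Fin (cycLen σ a) → ZMod 2) :=
  fun x _ jj => i ((σ ^ (jj : ℕ)) x)

lemma glue_pow (p : ∀ a : Fin m, a ∈ reps σ → (Fin (cycLen σ a) → ZMod 2))
    {x : Fin m} (hx : x ∈ reps σ) (jj : Fin (cycLen σ x)) :
    glue σ p ((σ ^ (jj : ℕ)) x) = p x hx jj := by
  have h1 : rp σ ((σ ^ (jj : ℕ)) x) = x :=
    (rp_eq_of_sameCycle σ (sameCycle_pow σ x jj).symm).trans (rp_eq_self_of_mem σ hx)
  have key : ∀ (a : Fin m) (e : a = x) (ha : a ∈ reps σ) (u : Fin (cycLen σ a)),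
      ((u : ℕ) = (jj : ℕ)) → p a ha u = p x hx jj := by
    rintro a rfl ha u hu
    obtain rfl : u = jj := Fin.ext hu
    rfl
  refine key _ h1 _ _ ?_
  have h2 : ∀ (a : Fin m) (e : a = x),
      ((idx σ a ((σ ^ (jj : ℕ)) x) : ℕ)) = (idx σ x ((σ ^ (jj : ℕ)) x) : ℕ) := by
    rintro a rfl; rfl
  show ((idx σ (rp σ ((σ ^ (jj : ℕ)) x)) ((σ ^ (jj : ℕ)) x) : ℕ)) = (jj : ℕ)
  rw [h2 _ h1, idx_pow σ x jj]

lemma split_glue (p : ∀ a : Fin m, a ∈ reps σ → (Fin (cycLen σ a) → ZMod 2)) :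
    split σ (glue σ p) = p := by
  funext x hx jj
  exact glue_pow σ p hx jj

lemma glue_split (i : Fin m → ZMod 2) : glue σ (split σ i) = i := by
  funext y
  show i ((σ ^ ((idx σ (rp σ y) y : ℕ))) (rp σ y)) = i y
  rw [idx_spec σ (rp_sameCycle σ y).symm]

lemma star (F : Fin m → ZMod 2 → ZMod 2 → R) :
    (∏ x ∈ reps σ, ∑ i : Fin (cycLen σ x) → ZMod 2,
        ∏ j : Fin (cycLen σ x), F ((σ ^ (j : ℕ)) x) (i j) (i (j + 1)))
      = ∑ i : Fin m → ZMod 2, ∏ r, F r (i r) (i (σ r)) := by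
  rw [Finset.prod_sum (reps σ) (fun _ => (Finset.univ : Finset _))
    (fun x (i : Fin (cycLen σ x) → ZMod 2) =>
      ∏ j : Fin (cycLen σ x), F ((σ ^ (j : ℕ)) x) (i j) (i (j + 1)))]
  refine Finset.sum_nbij' (fun p => glue σ p) (fun i => split σ i)
    (fun p _ => Finset.mem_univ _)
    (fun i _ => Finset.mem_pi.mpr fun a ha => Finset.mem_univ _)
    (fun p _ => split_glue σ p)
    (fun i _ => glue_split σ i)
    ?_
  intro p _
  rw [prod_univ_eq σ (fun r => F r (glue σ p r) (glue σ p (σ r)))]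
  rw [← Finset.prod_attach (reps σ)
    (fun x => ∏ j : Fin (cycLen σ x), F ((σ ^ (j : ℕ)) x) (glue σ p ((σ ^ (j : ℕ)) x))
      (glue σ p (σ ((σ ^ (j : ℕ)) x))))]
  refine Finset.prod_congr rfl fun x _ => ?_
  refine Finset.prod_congr rfl fun j _ => ?_
  rw [glue_pow σ p x.2 j, ← pow_succ_fin σ x.1 j, glue_pow σ p x.2 (j + 1)]

end Aux

theorem apf_eq_sum_adet_two_alpha (m : ℕ) (α : R)
    (B : Matrix (Fin (2 * m)) (Fin (2 * m)) R) (hB : Bᵀ = -B) :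
    apf α B = (⅟(2 : R)) ^ m * ∑ i : Fin m → ZMod 2,
      (∏ r, (-1 : R) ^ (i r).val) *
        adet (2 * α) (Matrix.of fun r s : Fin m => Bblk B r s (i r) (i s + 1)) := by
  rw [apf]
  simp only [adet, Matrix.of_apply, Finset.mul_sum]
  rw [Finset.sum_comm]
  refine Finset.sum_congr rfl fun σ _ => ?_
  have hν : nu σ ≤ m := by
    have := Finset.card_le_univ (reps σ)
    simpa [nu] using this
  have hkey : (⅟(2:R))^m * (2*α)^(m - nu σ) = α^(m - nu σ) * (⅟(2:R))^(nu σ) := by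
    calc (⅟(2:R))^m * (2*α)^(m - nu σ)
        = (⅟(2:R))^((m - nu σ) + nu σ) * (2*α)^(m - nu σ) := by rw [Nat.sub_add_cancel hν]
      _ = ((⅟(2:R)) * 2)^(m - nu σ) * (α^(m - nu σ) * (⅟(2:R))^(nu σ)) := by
          rw [pow_add, mul_pow, mul_pow]; ring
      _ = α^(m - nu σ) * (⅟(2:R))^(nu σ) := by rw [invOf_mul_self, one_pow, one_mul]
  have hP : ∀ x ∈ reps σ,
      (haveI : NeZero (cycLen σ x) := ⟨(orderOf_pos _).ne'⟩
       Pcyc B (fun j : Fin (cycLen σ x) => (σ ^ (j : ℕ)) x))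
      = ⅟(2:R) * ∑ i : Fin (cycLen σ x) → ZMod 2,
          ∏ j : Fin (cycLen σ x), (fun (r : Fin m) (a b : ZMod 2) =>
            (-1:R)^(a.val) * Bblk B r (σ r) a (b+1)) ((σ ^ (j : ℕ)) x) (i j) (i (j+1)) := by
    intro x hx
    rw [Pcyc]
    congr 1
    refine Finset.sum_congr rfl fun i _ => ?_
    rw [← Finset.prod_mul_distrib]
    refine Finset.prod_congr rfl fun j _ => ?_
    simp only
    rw [pow_succ_fin σ x j]
  rw [Finset.prod_congr rfl hP, Finset.prod_mul_distrib, Finset.prod_const]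
  have hcard : (reps σ).card = nu σ := rfl
  rw [hcard, star σ (fun (r : Fin m) (a b : ZMod 2) => (-1:R)^(a.val) * Bblk B r (σ r) a (b+1)), Finset.mul_sum, Finset.mul_sum]
  refine Finset.sum_congr rfl fun i _ => ?_
  beta_reduce
  rw [Finset.prod_mul_distrib]
  linear_combination -((∏ r, (-1:R)^((i r).val)) *
    (∏ r, Bblk B r (σ r) (i r) (i (σ r) + 1))) * hkey
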